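/- arXiv:1708.03613 — 2 statements merged into one kernel-verified Lean document; each statement's English description precedes it below -/
import Mathlib

section
/- Let (Ω, F, P) be a probability space with a filtration (F_k)_{k∈ℕ}. Let (ω(k))_{k∈ℕ} be a sequence of nonnegative, integrable real random variables adapted to (F_k), and let (x_k) and (y_k) be sequences of nonnegative reals with ∑_{k=1}^∞ x_k < ∞ and ∑_{k=1}^∞ y_k < ∞. Suppose that for every k, E[ω(k+1) | F_k] ≤ (1 + x_k)·ω(k) + y_k almost surely. Then there exists a nonnegative random variable ω(∞) such that ω(k) → ω(∞) almost surely as k → ∞. -/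
open MeasureTheory Filter Topology

/-- **Almost-supermartingale convergence (Robbins–Siegmund type lemma).**
If `(ω k)` is a nonnegative, integrable, adapted process satisfying
`E[ω (k+1) | ℱ k] ≤ (1 + x k) * ω k + y k` a.s. with `∑ x k < ∞` and `∑ y k < ∞`,
then `ω k` converges almost surely to some nonnegative random variable. -/
theorem stmt0 {Ω : Type*} {m0 : MeasurableSpace Ω} (P : Measure Ω) [IsProbabilityMeasure P]
    (ℱ : Filtration ℕ m0) (ω : ℕ → Ω → ℝ)
    (hadapted : Adapted ℱ ω)
    (hint : ∀ k, Integrable (ω k) P)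
    (hnonneg : ∀ k, 0 ≤ᵐ[P] ω k)
    (x y : ℕ → ℝ)
    (hx : ∀ k, 0 ≤ x k) (hy : ∀ k, 0 ≤ y k)
    (hxsum : Summable x) (hysum : Summable y)
    (hcond : ∀ k, P[ω (k + 1) | ℱ k] ≤ᵐ[P] fun a => (1 + x k) * ω k a + y k) :
    ∃ W : Ω → ℝ, ∀ᵐ a ∂P, 0 ≤ W a ∧ Tendsto (fun k => ω k a) atTop (nhds (W a)) := by
  classical
  -- the product A k = ∏_{j<k} (1+x j)
  set A : ℕ → ℝ := fun k => ∏ j ∈ Finset.range k, (1 + x j) with hAdef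
  have hAsucc : ∀ k, A (k + 1) = A k * (1 + x k) := fun k => Finset.prod_range_succ _ _
  have hA1 : ∀ k, 1 ≤ A k := by
    intro k
    induction k with
    | zero => simp [hAdef]
    | succ n ih =>
      rw [hAsucc]
      nlinarith [hx n]
  have hApos : ∀ k, 0 < A k := fun k => lt_of_lt_of_le one_pos (hA1 k)
  have hAmono : Monotone A := monotone_nat_of_le_succ fun k => by
    rw [hAsucc]; nlinarith [hApos k, hx k]
  have hAbd : ∀ k, A k ≤ Real.exp (∑' j, x j) := by
    intro k
    calc A k ≤ ∏ j ∈ Finset.range k, Real.exp (x j) :=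
          Finset.prod_le_prod (fun j _ => by linarith [hx j])
            (fun j _ => by linarith [Real.add_one_le_exp (x j)])
      _ = Real.exp (∑ j ∈ Finset.range k, x j) := (Real.exp_sum _ _).symm
      _ ≤ _ := Real.exp_le_exp.2 (hxsum.sum_le_tsum _ (fun j _ => hx j))
  obtain ⟨Ainf, hAinf⟩ : ∃ L, Tendsto A atTop (𝓝 L) :=
    ⟨_, tendsto_atTop_ciSup hAmono ⟨_, fun a ⟨k, hk⟩ => hk ▸ hAbd k⟩⟩
  -- the series S k = ∑_{j<k} y j / A (j+1)
  set u : ℕ → ℝ := fun j => y j / A (j + 1) with hudef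
  have hu0 : ∀ j, 0 ≤ u j := fun j => div_nonneg (hy j) (hApos _).le
  have huley : ∀ j, u j ≤ y j := fun j => div_le_self (hy j) (hA1 _)
  have husum : Summable u := Summable.of_nonneg_of_le hu0 huley hysum
  set S : ℕ → ℝ := fun k => ∑ j ∈ Finset.range k, u j with hSdef
  have hS0 : ∀ k, 0 ≤ S k := fun k => Finset.sum_nonneg fun j _ => hu0 j
  have hSleC : ∀ k, S k ≤ ∑' j, y j := fun k =>
    le_trans (Finset.sum_le_sum fun j _ => huley j) (hysum.sum_le_tsum _ (fun j _ => hy j))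
  have hC0 : 0 ≤ ∑' j, y j := tsum_nonneg hy
  set C : ℝ := ∑' j, y j with hCdef
  have hStend : Tendsto S atTop (𝓝 (∑' j, u j)) := husum.hasSum.tendsto_sum_nat
  -- the supermartingale Z
  set Z : ℕ → Ω → ℝ := fun k a => ω k a / A k - S k with hZdef
  have hZadp : Adapted ℱ Z := by
    intro k
    simp only [hZdef, div_eq_mul_inv]
    exact ((hadapted k).mul measurable_const).sub measurable_const
  have hZint : ∀ k, Integrable (Z k) P := fun k =>
    ((hint k).div_const (A k)).sub (integrable_const _)
  have hZstep : ∀ k, P[Z (k + 1)|ℱ k] ≤ᵐ[P] Z k := by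
    intro k
    have hrw : Z (k + 1) = (A (k + 1))⁻¹ • ω (k + 1) - fun _ => S (k + 1) := by
      funext a; simp [hZdef, div_eq_inv_mul, Pi.smul_apply, smul_eq_mul]
    have h1 : P[Z (k + 1)|ℱ k] =ᵐ[P]
        fun a => (A (k + 1))⁻¹ * (P[ω (k + 1)|ℱ k]) a - S (k + 1) := by
      rw [hrw]
      refine (condExp_sub ((hint (k + 1)).smul _) (integrable_const _) (ℱ k)).trans ?_
      rw [condExp_const (ℱ.le k)]
      filter_upwards [condExp_smul (μ := P) (m := ℱ k) ((A (k + 1))⁻¹) (ω (k + 1))] with a h2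
      simp only [Pi.sub_apply, h2, Pi.smul_apply, smul_eq_mul]
    refine h1.trans_le ?_
    filter_upwards [hcond k, hnonneg k] with a hca hna
    have hAk := hApos k
    have hAk1 := hApos (k + 1)
    have hsk : S (k + 1) = S k + y k / A (k + 1) := Finset.sum_range_succ _ _
    have h1x : (0 : ℝ) < 1 + x k := by linarith [hx k]
    have key : (A (k + 1))⁻¹ * ((1 + x k) * ω k a + y k) =
        ω k a / A k + y k / A (k + 1) := by
      rw [hAsucc k, mul_inv, div_eq_mul_inv, div_eq_mul_inv, mul_inv]
      have hcan : (1 + x k)⁻¹ * (1 + x k) = 1 := inv_mul_cancel₀ h1x.ne'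
      linear_combination ((A k)⁻¹ * ω k a) * hcan
    have hle : (A (k + 1))⁻¹ * (P[ω (k + 1)|ℱ k]) a ≤
        (A (k + 1))⁻¹ * ((1 + x k) * ω k a + y k) := by
      exact mul_le_mul_of_nonneg_left hca (inv_nonneg.2 hAk1.le)
    simp only [hZdef]
    calc (A (k + 1))⁻¹ * (P[ω (k + 1)|ℱ k]) a - S (k + 1)
        ≤ (ω k a / A k + y k / A (k + 1)) - S (k + 1) := by rw [← key]; linarith
      _ = ω k a / A k - S k := by rw [hsk]; ring
  have hZ : Supermartingale Z ℱ P := supermartingale_nat hZadp.stronglyAdapted hZint hZstep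
  -- L¹ bound
  have hZ0 : Z 0 = ω 0 := by
    funext a; simp [hZdef, hAdef, hSdef]
  have hZmean : ∀ n, ∫ a, Z n a ∂P ≤ ∫ a, ω 0 a ∂P := by
    intro n
    have := hZ.setIntegral_le (Nat.zero_le n) (MeasurableSet.univ (α := Ω))
    simpa [hZ0, setIntegral_univ] using this
  have hZlb : ∀ n, ∀ᵐ a ∂P, -C ≤ Z n a := by
    intro n
    filter_upwards [hnonneg n] with a ha
    have : 0 ≤ ω n a / A n := div_nonneg ha (hApos n).le
    have := hSleC n
    simp only [hZdef]; linarith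
  have habs : ∀ n, ∫ a, |Z n a| ∂P ≤ ∫ a, ω 0 a ∂P + 2 * C := by
    intro n
    have h1 : ∫ a, |Z n a| ∂P ≤ ∫ a, (Z n a + 2 * C) ∂P := by
      refine integral_mono_ae (hZint n).abs ((hZint n).add (integrable_const _)) ?_
      filter_upwards [hZlb n] with a ha
      rcases abs_cases (Z n a) with ⟨h, _⟩ | ⟨h, _⟩ <;> simp only [h] <;> linarith
    have h2 : ∫ a, (Z n a + 2 * C) ∂P = ∫ a, Z n a ∂P + 2 * C := by
      rw [integral_add (hZint n) (integrable_const _)]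
      simp
    linarith [hZmean n]
  set B : ℝ := (∫ a, ω 0 a ∂P) + 2 * C with hBdef
  have hbdd : ∀ n, eLpNorm ((-Z) n) 1 P ≤ ((B.toNNReal : NNReal) : ENNReal) := by
    intro n
    have h1 : eLpNorm ((-Z) n) 1 P = eLpNorm (Z n) 1 P := by
      simpa using eLpNorm_neg (f := Z n) (p := 1) (μ := P)
    have h3 : ((B.toNNReal : NNReal) : ENNReal) = ENNReal.ofReal B := rfl
    rw [h1, eLpNorm_one_eq_lintegral_enorm,
      ← ofReal_integral_norm_eq_lintegral_enorm (hZint n), h3]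
    refine ENNReal.ofReal_le_ofReal ?_
    simpa [Real.norm_eq_abs] using habs n
  -- convergence of -Z, hence of Z
  have hconv := (hZ.neg).exists_ae_tendsto_of_bdd hbdd
  set W : Ω → ℝ := fun a => limUnder atTop fun k => ω k a with hWdef
  refine ⟨W, ?_⟩
  filter_upwards [hconv, ae_all_iff.2 hnonneg] with a ⟨c, hc⟩ hpos
  have hZt : Tendsto (fun n => Z n a) atTop (𝓝 (-c)) := by
    have := hc.neg
    simpa using this
  have homega : ∀ k, ω k a = A k * (Z k a + S k) := by
    intro k
    have : Z k a + S k = ω k a / A k := by simp [hZdef]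
    rw [this, mul_div_cancel₀ _ (hApos k).ne']
  have hTend : Tendsto (fun k => ω k a) atTop (𝓝 (Ainf * (-c + ∑' j, u j))) := by
    have := hAinf.mul (hZt.add hStend)
    refine this.congr fun k => (homega k).symm
  have hW : W a = Ainf * (-c + ∑' j, u j) := hTend.limUnder_eq
  rw [hW]
  exact ⟨ge_of_tendsto' hTend fun k => hpos k, hTend⟩
end

section
/- Let (Ω, F, P) be a probability space with filtration (F_k)_{k∈ℕ}. Let μ* ∈ ℝⁿ with μ* ≥ 0 componentwise, let G > 0, and let (ε_k) be nonnegative reals with ∑_{k=1}^∞ ε_k² < ∞. For each k let h_k : ℝⁿ → ℝ be a concave function maximized at μ*, i.e., h_k(μ) ≤ h_k(μ*) for all μ ∈ ℝⁿ. Let (μ(k)) be a process adapted to (F_k) with values in the nonnegative orthant ℝⁿ₊, and let g(k+1) be F_{k+1}-measurable ℝⁿ-valued random vectors such that, almost surely, E[‖g(k+1)‖² | F_k] ≤ G² and E[g(k+1) | F_k] is a supergradient of h_k at μ(k). Suppose the process evolves as μ(k+1) = proj₊( μ(k) + ε_k · g(k+1) ) for all k. Then ‖μ(k) − μ*‖²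 converges almost surely to a nonnegative random variable as k → ∞. -/
open MeasureTheory Filter RealInnerProductSpace
open scoped ENNReal NNReal

/-- Componentwise projection onto the nonnegative orthant of `ℝⁿ`. -/
noncomputable def projPos {n : ℕ} (x : EuclideanSpace ℝ (Fin n)) : EuclideanSpace ℝ (Fin n) :=
  WithLp.toLp 2 (fun j => max (x j) 0)

lemma projPos_dist_le {n : ℕ} (x y : EuclideanSpace ℝ (Fin n)) (hy : ∀ j, 0 ≤ y j) :
    ‖projPos x - y‖ ≤ ‖x - y‖ := by
  rw [EuclideanSpace.norm_eq, EuclideanSpace.norm_eq]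
  apply Real.sqrt_le_sqrt
  apply Finset.sum_le_sum
  intro j _
  have : |max (x j) 0 - y j| ≤ |x j - y j| := by
    rcases le_or_gt 0 (x j) with hx | hx
    · rw [max_eq_left hx]
    · rw [max_eq_right hx.le]
      rw [abs_of_nonpos (by linarith [hy j]), abs_of_nonpos (by linarith [hy j])]
      linarith
  simpa [sq_abs, projPos] using pow_le_pow_left₀ (abs_nonneg _) this 2

lemma abs_coord_le_norm {n : ℕ} (x : EuclideanSpace ℝ (Fin n)) (j : Fin n) : |x j| ≤ ‖x‖ := by
  rw [EuclideanSpace.norm_eq, ← Real.sqrt_sq_eq_abs]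
  apply Real.sqrt_le_sqrt
  calc x j ^ 2 = ‖x j‖ ^ 2 := by rw [Real.norm_eq_abs, sq_abs]
    _ ≤ ∑ i, ‖x i‖ ^ 2 := Finset.single_le_sum (f := fun i => ‖x i‖ ^ 2)
        (fun i _ => sq_nonneg _) (Finset.mem_univ j)

lemma integrable_mul_of_sq {Ω : Type*} {m0 : MeasurableSpace Ω} {P : Measure Ω}
    {X Y : Ω → ℝ} (hXm : AEStronglyMeasurable X P) (hYm : AEStronglyMeasurable Y P)
    (hX2 : Integrable (fun a => X a ^ 2) P) (hY2 : Integrable (fun a => Y a ^ 2) P) :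
    Integrable (fun a => X a * Y a) P := by
  refine Integrable.mono' ((hX2.add hY2).div_const 2) (hXm.mul hYm) ?_
  filter_upwards with a
  have := sq_nonneg (|X a| - |Y a|)
  rw [Real.norm_eq_abs, abs_mul]; simp only [Pi.add_apply]
  nlinarith [sq_abs (X a), sq_abs (Y a), abs_nonneg (X a), abs_nonneg (Y a)]

/-- Conditional expectation commutes with continuous linear maps. -/
lemma condexp_clm {Ω E F : Type*} {m m0 : MeasurableSpace Ω} {P : Measure Ω}
    [IsFiniteMeasure P]
    [NormedAddCommGroup E] [NormedSpace ℝ E] [CompleteSpace E]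
    [NormedAddCommGroup F] [NormedSpace ℝ F] [CompleteSpace F]
    (hm : m ≤ m0) (T : E →L[ℝ] F) {f : Ω → E} (hf : Integrable f P) :
    (fun a => T ((P[f|m]) a)) =ᵐ[P] P[fun a => T (f a)|m] := by
  refine ae_eq_condExp_of_forall_setIntegral_eq hm (T.integrable_comp hf) ?_ ?_ ?_
  · intro s _ _
    exact (T.integrable_comp integrable_condExp).integrableOn
  · intro s hs _
    rw [T.integral_comp_comm integrable_condExp.integrableOn,
      T.integral_comp_comm hf.integrableOn, setIntegral_condExp hm hf hs]
  · exact (T.continuous.comp_stronglyMeasurable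
      stronglyMeasurable_condExp).aestronglyMeasurable

set_option maxHeartbeats 1000000 in
/-- **Almost sure convergence of the stochastic dual algorithm** (cf. Theorem 3 of the paper).
With square-summable stepsizes, bounded conditional second moments of the stochastic
supergradients, and each `h k` concave and maximized at `μ* ≥ 0`, the projected stochastic
supergradient iteration `μ(k+1) = [μ(k) + ε_k g(k+1)]₊` is such that `‖μ(k) − μ*‖²`
converges almost surely (hence so does `μ(k)`). -/
theorem stmt6 {Ω : Type*} {m0 : MeasurableSpace Ω} (P : Measure Ω) [IsProbabilityMeasure P]
    (ℱ : Filtration ℕ m0) {n : ℕ}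
    (μstar : EuclideanSpace ℝ (Fin n)) (hμstar : ∀ j, 0 ≤ μstar j)
    (G : ℝ) (hG : 0 < G)
    (ε : ℕ → ℝ) (hε : ∀ k, 0 ≤ ε k) (hεsq : Summable fun k => (ε k) ^ 2)
    (h : ℕ → EuclideanSpace ℝ (Fin n) → ℝ)
    (hconc : ∀ k, ConcaveOn ℝ Set.univ (h k))
    (hmax : ∀ k ν, h k ν ≤ h k μstar)
    (μproc : ℕ → Ω → EuclideanSpace ℝ (Fin n))
    (hadapted : Adapted ℱ μproc)
    (hpos : ∀ k a j, 0 ≤ μproc k a j)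
    (g : ℕ → Ω → EuclideanSpace ℝ (Fin n))
    (hgmeas : ∀ k, StronglyMeasurable[ℱ (k + 1)] (g (k + 1)))
    (hgint : ∀ k, Integrable (g (k + 1)) P)
    (hgsqint : ∀ k, Integrable (fun a => ‖g (k + 1) a‖ ^ 2) P)
    (hbound : ∀ k, ∀ᵐ a ∂P, (P[fun a' => ‖g (k + 1) a'‖ ^ 2 | ℱ k]) a ≤ G ^ 2)
    (hsupergrad : ∀ k, ∀ᵐ a ∂P, ∀ ν,
      h k ν ≤ h k (μproc k a) + ⟪(P[g (k + 1) | ℱ k]) a, ν - μproc k a⟫)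
    (hupdate : ∀ k a, μproc (k + 1) a = projPos (μproc k a + ε k • g (k + 1) a)) :
    ∃ W : Ω → ℝ, ∀ᵐ a ∂P, 0 ≤ W a ∧
      Tendsto (fun k => ‖μproc k a - μstar‖ ^ 2) atTop (nhds (W a)) := by
  classical
  set V : ℕ → Ω → ℝ := fun k a => ‖μproc k a - μstar‖ ^ 2 with hVdef
  have hDmeas : ∀ k, StronglyMeasurable[ℱ k] (fun a => μproc k a - μstar) :=
    fun k => (hadapted k).stronglyMeasurable.sub stronglyMeasurable_const
  have hdist : ∀ k a, ‖μproc (k + 1) a - μstar‖ ≤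
      ‖(μproc k a - μstar) + ε k • g (k + 1) a‖ := by
    intro k a
    rw [hupdate k a]
    calc ‖projPos (μproc k a + ε k • g (k + 1) a) - μstar‖
        ≤ ‖μproc k a + ε k • g (k + 1) a - μstar‖ :=
          projPos_dist_le (μproc k a + ε k • g (k + 1) a) μstar hμstar
      _ = ‖(μproc k a - μstar) + ε k • g (k + 1) a‖ := by rw [add_sub_right_comm]
  have hkey : ∀ k a, V (k + 1) a ≤ V k a
      + 2 * ε k * ⟪g (k + 1) a, μproc k a - μstar⟫
      + ε k ^ 2 * ‖g (k + 1) a‖ ^ 2 := by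
    intro k a
    have h2 : V (k + 1) a ≤ ‖(μproc k a - μstar) + ε k • g (k + 1) a‖ ^ 2 :=
      pow_le_pow_left₀ (norm_nonneg _) (hdist k a) 2
    rw [norm_add_sq_real] at h2
    rw [real_inner_smul_right, norm_smul, Real.norm_eq_abs, abs_of_nonneg (hε k),
      mul_pow] at h2
    calc V (k + 1) a ≤ ‖μproc k a - μstar‖ ^ 2
          + 2 * (ε k * ⟪μproc k a - μstar, g (k + 1) a⟫)
          + ε k ^ 2 * ‖g (k + 1) a‖ ^ 2 := h2
      _ = V k a + 2 * ε k * ⟪g (k + 1) a, μproc k a - μstar⟫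
          + ε k ^ 2 * ‖g (k + 1) a‖ ^ 2 := by
            rw [real_inner_comm]; simp only [hVdef]; ring
  have hstep : ∀ k a, ‖μproc (k + 1) a - μstar‖ ≤
      ‖μproc k a - μstar‖ + ε k * ‖g (k + 1) a‖ := by
    intro k a
    refine (hdist k a).trans ((norm_add_le _ _).trans ?_)
    rw [norm_smul, Real.norm_eq_abs, abs_of_nonneg (hε k)]
  have hgmem : ∀ k, MemLp (fun a => ‖g (k + 1) a‖) 2 P := by
    intro k
    refine (memLp_two_iff_integrable_sq ?_).2 ?_
    · exact ((hgmeas k).mono (ℱ.le _)).aestronglyMeasurable.norm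
    · simpa [Real.norm_eq_abs, sq_abs] using hgsqint k
  -- tail sums
  set tail : ℕ → ℝ := fun k => ∑' j, ε (j + k) ^ 2 with htaildef
  have htail_nonneg : ∀ k, 0 ≤ tail k := fun k => tsum_nonneg fun j => sq_nonneg _
  have htail_summable : ∀ k, Summable (fun j => ε (j + k) ^ 2) := fun k =>
    ((summable_nat_add_iff k).2 hεsq)
  have htail_succ : ∀ k, tail k = ε k ^ 2 + tail (k + 1) := by
    intro k
    have h0 := Summable.tsum_eq_zero_add (f := fun j => ε (j + k) ^ 2) (htail_summable k)
    simp only [zero_add] at h0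
    rw [htaildef]
    simp only
    rw [h0]
    congr 1
    apply tsum_congr
    intro j
    congr 2
    omega
  have htail_tendsto : Tendsto tail atTop (nhds 0) := by
    have heq : tail = fun k => (∑' i, ε i ^ 2) - ∑ i ∈ Finset.range k, ε i ^ 2 := by
      funext k
      have := Summable.sum_add_tsum_nat_add (f := fun i => ε i ^ 2) k hεsq
      simp only [htaildef]
      linarith
    rw [heq]
    have h2 := (tendsto_const_nhds (x := ∑' i, ε i ^ 2) (f := atTop)).sub
      hεsq.hasSum.tendsto_sum_nat
    simpa only [sub_self] using h2
  set W : Ω → ℝ := fun a => limsup (fun k => V k a) atTop with hWdef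
  have main : ∀ M : ℕ, ∀ᵐ a ∂P, ‖μproc 0 a - μstar‖ ≤ M →
      Tendsto (fun k => V k a) atTop (nhds (W a)) := by
    intro M
    set A : Set Ω := {a | ‖μproc 0 a - μstar‖ ≤ M} with hAdef
    have hA0 : MeasurableSet[ℱ 0] A :=
      measurableSet_le (hDmeas 0).norm.measurable measurable_const
    have hAk : ∀ k, MeasurableSet[ℱ k] A := fun k => ℱ.mono (Nat.zero_le k) _ hA0
    set B : ℕ → Ω → ℝ := fun k a => (M : ℝ) + ∑ j ∈ Finset.range k, ε j * ‖g (j + 1) a‖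
      with hBdef
    have hBnonneg : ∀ k a, 0 ≤ B k a := by
      intro k a
      have : 0 ≤ ∑ j ∈ Finset.range k, ε j * ‖g (j + 1) a‖ :=
        Finset.sum_nonneg fun j _ => mul_nonneg (hε j) (norm_nonneg _)
      positivity
    have hBmem : ∀ k, MemLp (B k) 2 P := by
      intro k
      have h1 : ((fun _ => (M : ℝ)) + ∑ j ∈ Finset.range k,
          fun a => ε j * ‖g (j + 1) a‖) = B k := by
        funext a
        simp [hBdef, Finset.sum_apply]
      rw [← h1]
      exact (memLp_const (M : ℝ)).add
        (memLp_finsetSum' (Finset.range k) fun j _ => (hgmem j).const_mul (ε j))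
    have hB2int : ∀ k, Integrable (fun a => B k a ^ 2) P := fun k => (hBmem k).integrable_sq
    have hBmeas : ∀ k, AEStronglyMeasurable (B k) P := fun k => (hBmem k).aestronglyMeasurable
    have hAB : ∀ a, a ∈ A → ∀ k, ‖μproc k a - μstar‖ ≤ B k a := by
      intro a ha k
      induction k with
      | zero => simpa [hBdef, hAdef] using ha
      | succ k ih =>
        refine (hstep k a).trans ?_
        simp only [hBdef] at ih ⊢
        rw [Finset.sum_range_succ]
        linarith
    set I : ℕ → Ω → ℝ := fun k => A.indicator (V k) with hIdef
    have hVmeas : ∀ k, StronglyMeasurable[ℱ k] (V k) := fun k => (hDmeas k).norm.pow 2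
    have hImeas : ∀ k, StronglyMeasurable[ℱ k] (I k) := fun k =>
      (hVmeas k).indicator (hAk k)
    have hInonneg : ∀ k a, 0 ≤ I k a := fun k a =>
      Set.indicator_nonneg (fun a' _ => sq_nonneg _) a
    have hIbound : ∀ k a, ‖I k a‖ ≤ B k a ^ 2 := by
      intro k a
      by_cases ha : a ∈ A
      · rw [hIdef]; simp only [Set.indicator_of_mem ha]
        rw [Real.norm_eq_abs, abs_of_nonneg (sq_nonneg _)]
        exact pow_le_pow_left₀ (norm_nonneg _) (hAB a ha k) 2
      · rw [hIdef]; simp only [Set.indicator_of_notMem ha]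
        simpa using sq_nonneg (B k a)
    have hIint : ∀ k, Integrable (I k) P := by
      intro k
      refine Integrable.mono' (hB2int k) ((hImeas k).mono (ℱ.le k)).aestronglyMeasurable ?_
      filter_upwards with a using hIbound k a
    set U : ℕ → Ω → ℝ := fun k =>
      A.indicator (fun a => ⟪g (k + 1) a, μproc k a - μstar⟫) with hUdef
    have hUbound : ∀ k a, ‖U k a‖ ≤ ‖g (k + 1) a‖ * B k a := by
      intro k a
      by_cases ha : a ∈ A
      · rw [hUdef]; simp only [Set.indicator_of_mem ha]
        rw [Real.norm_eq_abs]
        exact (abs_real_inner_le_norm _ _).trans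
          (mul_le_mul_of_nonneg_left (hAB a ha k) (norm_nonneg _))
      · rw [hUdef]; simp only [Set.indicator_of_notMem ha]
        simpa using mul_nonneg (norm_nonneg _) (hBnonneg k a)
    have hgnormmeas : ∀ k, AEStronglyMeasurable (fun a => ‖g (k + 1) a‖) P :=
      fun k => ((hgmeas k).mono (ℱ.le _)).aestronglyMeasurable.norm
    have hgBint : ∀ k, Integrable (fun a => ‖g (k + 1) a‖ * B k a) P := fun k =>
      integrable_mul_of_sq (hgnormmeas k) (hBmeas k) (hgsqint k) (hB2int k)
    have hUint : ∀ k, Integrable (U k) P := by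
      intro k
      refine Integrable.mono' (hgBint k) ?_ ?_
      · exact (StronglyMeasurable.indicator
          (((hgmeas k).mono (ℱ.le _)).inner ((hDmeas k).mono (ℱ.le _)))
          ((ℱ.le k) _ (hAk k))).aestronglyMeasurable
      · filter_upwards with a using hUbound k a
    -- conditional expectation of U is a.e. nonpositive
    have hUcond : ∀ k, (P[U k | ℱ k]) ≤ᵐ[P] 0 := by
      intro k
      -- coordinate decomposition
      set c : Fin n → Ω → ℝ := fun j => A.indicator (fun a => (μproc k a - μstar) j)
        with hcdef
      have hcmeas : ∀ j, StronglyMeasurable[ℱ k] (c j) := fun j =>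
        (((EuclideanSpace.proj j (𝕜 := ℝ)).continuous.comp_stronglyMeasurable
          (hDmeas k))).indicator (hAk k)
      have hcbound : ∀ j a, |c j a| ≤ B k a := by
        intro j a
        by_cases ha : a ∈ A
        · rw [hcdef]; simp only [Set.indicator_of_mem ha]
          exact (abs_coord_le_norm _ j).trans (hAB a ha k)
        · rw [hcdef]; simp only [Set.indicator_of_notMem ha, abs_zero]
          exact hBnonneg k a
      have hgjint : ∀ j : Fin n, Integrable (fun a => g (k + 1) a j) P := by
        intro j
        have := (EuclideanSpace.proj j (𝕜 := ℝ)).integrable_comp (hgint k)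
        simpa using this
      have hgjmeas : ∀ j : Fin n, AEStronglyMeasurable (fun a => g (k + 1) a j) P :=
        fun j => (hgjint j).aestronglyMeasurable
      have hcgint : ∀ j, Integrable (c j * fun a => g (k + 1) a j) P := by
        intro j
        refine Integrable.mono'
          (integrable_mul_of_sq (hBmeas k) (hgnormmeas k) (hB2int k) (hgsqint k))
          ((((hcmeas j).mono (ℱ.le k)).aestronglyMeasurable).mul (hgjmeas j)) ?_
        filter_upwards with a
        rw [Pi.mul_apply, Real.norm_eq_abs, abs_mul]
        exact mul_le_mul (hcbound j a) (abs_coord_le_norm _ j) (abs_nonneg _)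
          (hBnonneg k a)
      -- pull-out property coordinatewise
      have hpull : ∀ j, P[c j * fun a => g (k + 1) a j|ℱ k] =ᵐ[P]
          c j * P[fun a => g (k + 1) a j|ℱ k] :=
        fun j => condExp_mul_of_stronglyMeasurable_left (hcmeas j) (hcgint j) (hgjint j)
      have hcoord : ∀ j, (fun a => (P[g (k + 1)|ℱ k]) a j) =ᵐ[P]
          P[fun a => g (k + 1) a j|ℱ k] := by
        intro j
        have := condexp_clm (ℱ.le k) (EuclideanSpace.proj j (𝕜 := ℝ)) (hgint k)
        simpa using this
      have hUeq : U k = ∑ j : Fin n, (c j * fun a => g (k + 1) a j) := by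
        funext a
        rw [Finset.sum_apply]
        by_cases ha : a ∈ A
        · rw [hUdef]; simp only [Set.indicator_of_mem ha]
          rw [real_inner_comm]
          rw [PiLp.inner_apply]
          apply Finset.sum_congr rfl
          intro j _
          rw [hcdef, Pi.mul_apply]
          simp only [Set.indicator_of_mem ha]
          simp [RCLike.inner_apply, conj_trivial, mul_comm]
        · rw [hUdef]; simp only [Set.indicator_of_notMem ha]
          symm
          apply Finset.sum_eq_zero
          intro j _
          rw [hcdef, Pi.mul_apply]
          simp [Set.indicator_of_notMem ha]
      have hsum : P[U k|ℱ k] =ᵐ[P] ∑ j : Fin n, (c j * P[fun a => g (k + 1) a j|ℱ k]) := by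
        rw [hUeq]
        refine (condExp_finsetSum (fun j _ => hcgint j) (ℱ k)).trans ?_
        have : ∀ᵐ a ∂P, ∀ j : Fin n,
            (P[c j * fun a' => g (k + 1) a' j|ℱ k]) a
              = (c j * P[fun a' => g (k + 1) a' j|ℱ k]) a :=
          ae_all_iff.2 fun j => hpull j
        filter_upwards [this] with a ha
        rw [Finset.sum_apply, Finset.sum_apply]
        exact Finset.sum_congr rfl fun j _ => ha j
      have hcoord' : ∀ᵐ a ∂P, ∀ j : Fin n,
          (P[g (k + 1)|ℱ k]) a j = (P[fun a' => g (k + 1) a' j|ℱ k]) a :=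
        ae_all_iff.2 fun j => hcoord j
      filter_upwards [hsum, hcoord', hsupergrad k] with a ha hca hsa
      rw [Pi.zero_apply, ha, Finset.sum_apply]
      by_cases haA : a ∈ A
      · have hinner : ∑ j : Fin n, (c j * P[fun a' => g (k + 1) a' j|ℱ k]) a
            = ⟪(P[g (k + 1)|ℱ k]) a, μproc k a - μstar⟫ := by
          rw [real_inner_comm, PiLp.inner_apply]
          apply Finset.sum_congr rfl
          intro j _
          rw [Pi.mul_apply, hcdef]
          simp only [Set.indicator_of_mem haA]
          rw [← hca j]
          simp [RCLike.inner_apply, conj_trivial, mul_comm]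
        rw [hinner]
        have h1 := hsa μstar
        have h2 := hmax k (μproc k a)
        have h3 : 0 ≤ ⟪(P[g (k + 1)|ℱ k]) a, μstar - μproc k a⟫ := by linarith
        have h4 : μproc k a - μstar = -(μstar - μproc k a) := by abel
        rw [h4, inner_neg_right]
        linarith
      · apply le_of_eq
        apply Finset.sum_eq_zero
        intro j _
        rw [Pi.mul_apply, hcdef]
        simp [Set.indicator_of_notMem haA]
    -- one-step conditional inequality
    have hIcond : ∀ k, (P[I (k + 1) | ℱ k]) ≤ᵐ[P]
        fun a => I k a + ε k ^ 2 * G ^ 2 := by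
      intro k
      set Z : Ω → ℝ := fun a => I k a + (2 * ε k) * U k a
        + ε k ^ 2 * ‖g (k + 1) a‖ ^ 2 with hZdef
      have hZint : Integrable Z P :=
        (((hIint k).add ((hUint k).const_mul (2 * ε k))).add ((hgsqint k).const_mul (ε k ^ 2)))
      have hle : I (k + 1) ≤ᵐ[P] Z := by
        filter_upwards with a
        by_cases ha : a ∈ A
        · simp only [hZdef, hIdef, hUdef, Set.indicator_of_mem ha]
          exact hkey k a
        · simp only [hZdef, hIdef, hUdef, Set.indicator_of_notMem ha, mul_zero,
            add_zero, zero_add]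
          positivity
      have hm := condExp_mono (hIint (k + 1)) hZint hle (m := ℱ k)
      have hz1 : P[Z|ℱ k] =ᵐ[P] fun a => I k a
          + (2 * ε k) * (P[U k|ℱ k]) a
          + ε k ^ 2 * (P[fun a' => ‖g (k + 1) a'‖ ^ 2|ℱ k]) a := by
        have e1 : Z = (I k + (2 * ε k) • U k)
            + (ε k ^ 2) • (fun a => ‖g (k + 1) a‖ ^ 2) := by
          funext a
          simp only [hZdef, Pi.add_apply, Pi.smul_apply, smul_eq_mul]
        rw [e1]
        have i1 : Integrable (I k + (2 * ε k) • U k) P :=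
          (hIint k).add ((hUint k).smul (2 * ε k))
        have i2 : Integrable ((ε k ^ 2) • fun a => ‖g (k + 1) a‖ ^ 2 : Ω → ℝ) P :=
          (hgsqint k).smul (ε k ^ 2)
        refine (condExp_add i1 i2 (ℱ k)).trans ?_
        have c1 : P[I k + (2 * ε k) • U k|ℱ k] =ᵐ[P]
            fun a => I k a + (2 * ε k) * (P[U k|ℱ k]) a := by
          refine (condExp_add (hIint k) ((hUint k).smul (2 * ε k)) (ℱ k)).trans ?_
          have cI : P[I k|ℱ k] = I k :=
            condExp_of_stronglyMeasurable (ℱ.le k) (hImeas k) (hIint k)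
          filter_upwards [condExp_smul (2 * ε k) (U k) (m := ℱ k) (μ := P)] with a ha
          rw [Pi.add_apply, cI, ha, Pi.smul_apply, smul_eq_mul]
        have c2 : P[(ε k ^ 2) • (fun a => ‖g (k + 1) a‖ ^ 2)|ℱ k] =ᵐ[P]
            fun a => ε k ^ 2 * (P[fun a' => ‖g (k + 1) a'‖ ^ 2|ℱ k]) a := by
          filter_upwards [condExp_smul (ε k ^ 2)
            (fun a => ‖g (k + 1) a‖ ^ 2) (m := ℱ k) (μ := P)] with a ha
          rw [ha, Pi.smul_apply, smul_eq_mul]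
        filter_upwards [c1, c2] with a h1 h2
        rw [Pi.add_apply, h1, h2]
      filter_upwards [hm, hz1, hUcond k, hbound k] with a h1 h2 h3 h4
      rw [h2] at h1
      have h3' : (P[U k|ℱ k]) a ≤ 0 := h3
      have h5 : (2 * ε k) * (P[U k|ℱ k]) a ≤ 0 :=
        mul_nonpos_of_nonneg_of_nonpos (by linarith [hε k]) h3'
      have h6 : ε k ^ 2 * (P[fun a' => ‖g (k + 1) a'‖ ^ 2|ℱ k]) a ≤ ε k ^ 2 * G ^ 2 :=
        mul_le_mul_of_nonneg_left h4 (sq_nonneg _)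
      calc (P[I (k + 1)|ℱ k]) a ≤ _ := h1
        _ ≤ I k a + ε k ^ 2 * G ^ 2 := by linarith
    -- the supermartingale
    set f : ℕ → Ω → ℝ := fun k a => I k a + G ^ 2 * tail k with hfdef
    have hfint : ∀ k, Integrable (f k) P := fun k => (hIint k).add (integrable_const _)
    have hfadp : StronglyAdapted ℱ f := fun k => (hImeas k).add stronglyMeasurable_const
    have hsup : Supermartingale f ℱ P := by
      refine supermartingale_nat hfadp hfint fun k => ?_
      have hc : P[f (k + 1) | ℱ k] =ᵐ[P]
          fun a => (P[I (k + 1)|ℱ k]) a + G ^ 2 * tail (k + 1) := by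
        have h1 : f (k + 1) = I (k + 1) + fun _ => G ^ 2 * tail (k + 1) := rfl
        rw [h1]
        filter_upwards [condExp_add (hIint (k + 1))
          (integrable_const (G ^ 2 * tail (k + 1))) (m := ℱ k)] with a ha
        rw [ha, Pi.add_apply, condExp_const (ℱ.le k)]
      filter_upwards [hc, hIcond k] with a hca hIa
      rw [hca]
      have hfk : f k a = I k a + G ^ 2 * (ε k ^ 2 + tail (k + 1)) := by
        rw [hfdef]
        simp only
        rw [← htail_succ k]
      rw [hfk]
      have hIa' : (P[I (k + 1)|ℱ k]) a ≤ I k a + ε k ^ 2 * G ^ 2 := hIa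
      nlinarith [sq_nonneg G, sq_nonneg (ε k)]
    have hfnonneg : ∀ k a, 0 ≤ f k a := by
      intro k a
      have h1 := hInonneg k a
      have h2 := htail_nonneg k
      have h3 : (0:ℝ) ≤ G ^ 2 := sq_nonneg G
      simp only [hfdef]
      nlinarith
    have hbdd : ∀ k, eLpNorm (f k) 1 P ≤ ENNReal.ofReal (∫ a, f 0 a ∂P) := by
      intro k
      have h1 : eLpNorm (f k) 1 P = ENNReal.ofReal (∫ a, ‖f k a‖ ∂P) := by
        rw [eLpNorm_one_eq_lintegral_enorm,
          ← ofReal_integral_norm_eq_lintegral_enorm (hfint k)]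
      rw [h1]
      apply ENNReal.ofReal_le_ofReal
      have h2 : ∫ a, ‖f k a‖ ∂P = ∫ a, f k a ∂P := by
        congr 1; funext a; rw [Real.norm_eq_abs, abs_of_nonneg (hfnonneg k a)]
      rw [h2]
      have := hsup.setIntegral_le (Nat.zero_le k) (MeasurableSet.univ (α := Ω))
      simpa [Measure.restrict_univ] using this
    have hRbdd : ∀ k, eLpNorm (f k) 1 P ≤
        ((ENNReal.ofReal (∫ a, f 0 a ∂P)).toNNReal : ℝ≥0∞) := by
      intro k
      have := hbdd k
      rwa [ENNReal.coe_toNNReal ENNReal.ofReal_ne_top]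
    have hconv : ∀ᵐ a ∂P, ∃ c, Tendsto (fun k => f k a) atTop (nhds c) := by
      have hneg := hsup.neg.ae_tendsto_limitProcess
        (R := (ENNReal.ofReal (∫ a, f 0 a ∂P)).toNNReal)
        (fun k => le_trans (le_of_eq (eLpNorm_neg (f k) 1 P)) (hRbdd k))
      filter_upwards [hneg] with a ha
      have := ha.neg
      simp only [Pi.neg_apply, neg_neg] at this
      exact ⟨_, this⟩
    filter_upwards [hconv] with a ha haA
    obtain ⟨c, hc⟩ := ha
    have haA' : a ∈ A := haA
    have hVf : (fun k => V k a) = fun k => f k a - G ^ 2 * tail k := by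
      funext k
      simp only [hfdef]
      rw [hIdef]
      simp only [Set.indicator_of_mem haA']
      ring
    have hT : Tendsto (fun k => V k a) atTop (nhds c) := by
      rw [hVf]
      have h2 : Tendsto (fun k => f k a - G ^ 2 * tail k) atTop
          (nhds (c - G ^ 2 * 0)) := hc.sub (htail_tendsto.const_mul (G ^ 2))
      simpa only [mul_zero, sub_zero] using h2
    have hWc : W a = c := hT.limsup_eq
    rw [hWc]
    exact hT
  refine ⟨W, ?_⟩
  filter_upwards [ae_all_iff.2 main] with a ha
  have hM : ‖μproc 0 a - μstar‖ ≤ (⌈‖μproc 0 a - μstar‖⌉₊ : ℝ) := Nat.le_ceil _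
  have hT := ha _ hM
  exact ⟨ge_of_tendsto' hT fun k => sq_nonneg _, hT⟩
end
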